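/- With notation as above, X(n+1, a, b) is stochastically dominated by X(n, a, b) for all a, b ≤ n. -/

import Mathlib

/-- A directed cycle of length `n` in the digraph with arc relation `A`:
an injective map `f : ZMod n → V` with an arc from each vertex to the next. -/
def IsDicycle {V : Type*} (A : V → V → Prop) (n : ℕ) (f : ZMod n → V) : Prop :=
  0 < n ∧ Function.Injective f ∧ ∀ i, A (f i) (f (i + 1))

/-- A set of vertices is acyclic if it contains no directed cycle. -/
def AcyclicSet {V : Type*} (A : V → V → Prop) (S : Set V) : Prop :=
  ∀ (n : ℕ) (f : ZMod n → V), (∀ i, f i ∈ S) → ¬ IsDicycle A n f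

/-- The dichromatic number: least `k` such that the vertices can be colored with `k`
colors with every color class acyclic. -/
noncomputable def dichromatic {V : Type*} (A : V → V → Prop) : ℕ :=
  sInf {k | ∃ c : V → Fin k, ∀ i, AcyclicSet A (c ⁻¹' {i})}

/-- The maximum size of an acyclic set of vertices. -/
noncomputable def maxAcyclic {V : Type*} [Fintype V] (A : V → V → Prop) : ℕ :=
  sSup {k | ∃ S : Finset V, AcyclicSet A ↑S ∧ S.card = k}

open Finset

/-- Delete the point `Fin.last n` from the domain and `σ (Fin.last n)` from the codomain. -/
noncomputable def delPerm (n : ℕ) (σ : Equiv.Perm (Fin (n+1))) : Equiv.Perm (Fin n) :=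
  Equiv.removeNone ((finSuccEquiv' (Fin.last n)).symm.trans
    (σ.trans (finSuccEquiv' (σ (Fin.last n)))))

lemma delPerm_spec (n : ℕ) (σ : Equiv.Perm (Fin (n+1))) (i : Fin n) :
    (σ (Fin.last n)).succAbove (delPerm n σ i) = σ (Fin.castSucc i) := by
  set p := σ (Fin.last n) with hp
  have hne : σ (Fin.castSucc i) ≠ p := by
    intro h
    exact absurd (σ.injective h) (by simp [Fin.ext_iff, (Fin.castSucc_lt_last i).ne])
  obtain ⟨j, hj⟩ := Fin.exists_succAbove_eq hne
  have he : ((finSuccEquiv' (Fin.last n)).symm.trans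
      (σ.trans (finSuccEquiv' p))) (some i) = some j := by
    simp [Equiv.trans_apply, finSuccEquiv'_symm_some, Fin.succAbove_last, ← hj,
      finSuccEquiv'_succAbove]
  have := Equiv.removeNone_some _ ⟨j, he⟩
  rw [he] at this
  have : delPerm n σ i = j := by
    simpa [delPerm] using Option.some_injective _ this
  rw [this, hj]

lemma val_le_succAbove {n : ℕ} (p : Fin (n+1)) (j : Fin n) :
    (j : ℕ) ≤ (p.succAbove j : ℕ) := by
  rw [Fin.succAbove]
  split <;> simp

/-- Recover `σ` from `σ (Fin.last n)` and `delPerm n σ`. -/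
lemma delPerm_inj {n : ℕ} {σ σ' : Equiv.Perm (Fin (n+1))}
    (h1 : σ (Fin.last n) = σ' (Fin.last n)) (h2 : delPerm n σ = delPerm n σ') : σ = σ' := by
  apply Equiv.ext
  intro x
  induction x using Fin.lastCases with
  | last => exact h1
  | cast i =>
      have := delPerm_spec n σ i
      rw [h1, h2, delPerm_spec n σ' i] at this
      exact this.symm

/-- With `X(n,a,b)` as above (edges of a uniformly random perfect matching
of `K_{n,n}` between fixed sets of sizes `a` and `b`), `X(n+1,a,b)` is stochastically
dominated by `X(n,a,b)` for all `a, b ≤ n`. -/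
theorem stmt16 (n a b : ℕ) (hn : 1 ≤ n) (ha : a ≤ n) (hb : b ≤ n) (t : ℕ) :
    ((Finset.univ.filter (fun σ : Equiv.Perm (Fin (n + 1)) =>
        t ≤ (Finset.univ.filter
          (fun i : Fin (n + 1) => (i : ℕ) < a ∧ ((σ i : ℕ) < b))).card)).card : ℝ)
      / (Nat.factorial (n + 1)) ≤
    ((Finset.univ.filter (fun σ : Equiv.Perm (Fin n) =>
        t ≤ (Finset.univ.filter
          (fun i : Fin n => (i : ℕ) < a ∧ ((σ i : ℕ) < b))).card)).card : ℝ)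
      / (Nat.factorial n) := by
  classical
  set S1 := Finset.univ.filter (fun σ : Equiv.Perm (Fin (n + 1)) =>
      t ≤ (Finset.univ.filter
        (fun i : Fin (n + 1) => (i : ℕ) < a ∧ ((σ i : ℕ) < b))).card) with hS1
  set S0 := Finset.univ.filter (fun σ : Equiv.Perm (Fin n) =>
      t ≤ (Finset.univ.filter
        (fun i : Fin n => (i : ℕ) < a ∧ ((σ i : ℕ) < b))).card) with hS0
  -- the deletion map sends S1 into S0
  have hmaps : ∀ σ ∈ S1, delPerm n σ ∈ S0 := by
    intro σ hσ
    rw [hS1, Finset.mem_filter] at hσ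
    rw [hS0, Finset.mem_filter]
    refine ⟨Finset.mem_univ _, le_trans hσ.2 ?_⟩
    apply Finset.card_le_card_of_injOn
      (fun i : Fin (n+1) => if h : (i : ℕ) < n then (⟨(i : ℕ), h⟩ : Fin n) else ⟨0, hn⟩)
    · intro i hi
      rw [Finset.mem_coe, Finset.mem_filter] at hi
      obtain ⟨-, hia, hib⟩ := hi
      have hin : (i : ℕ) < n := lt_of_lt_of_le hia ha
      rw [Finset.mem_coe, Finset.mem_filter]
      refine ⟨Finset.mem_univ _, ?_⟩
      simp only [hin, dif_pos]
      refine ⟨hia, ?_⟩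
      have hcs : Fin.castSucc (⟨(i : ℕ), hin⟩ : Fin n) = i := by
        ext; simp
      calc ((delPerm n σ ⟨(i : ℕ), hin⟩ : Fin n) : ℕ)
          ≤ ((σ (Fin.last n)).succAbove (delPerm n σ ⟨(i : ℕ), hin⟩) : ℕ) :=
            val_le_succAbove _ _
        _ = ((σ i : Fin (n+1)) : ℕ) := by rw [delPerm_spec, hcs]
        _ < b := hib
    · intro i hi j hj hij
      rw [Finset.mem_coe, Finset.mem_filter] at hi hj
      have hin : (i : ℕ) < n := lt_of_lt_of_le hi.2.1 ha
      have hjn : (j : ℕ) < n := lt_of_lt_of_le hj.2.1 ha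
      simp only [hin, hjn, dif_pos] at hij
      have : (i : ℕ) = (j : ℕ) := by simpa [Fin.ext_iff] using hij
      exact Fin.ext this
  -- each fiber of delPerm has at most n+1 elements
  have hcard : S1.card ≤ (n + 1) * S0.card := by
    apply Finset.card_le_mul_card_image_of_maps_to hmaps
    intro τ hτ
    have : ((S1.filter fun σ => delPerm n σ = τ) : Finset _).card ≤
        (Finset.univ : Finset (Fin (n+1))).card := by
      apply Finset.card_le_card_of_injOn (fun σ => σ (Fin.last n))
        (fun _ _ => Finset.mem_univ _)
      intro σ hσ σ' hσ' h
      rw [Finset.mem_coe, Finset.mem_filter] at hσ hσ'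
      exact delPerm_inj h (hσ.2.trans hσ'.2.symm)
    simpa using this
  -- conclude by dividing
  have hfac : (Nat.factorial (n+1) : ℝ) = (n+1) * Nat.factorial n := by
    rw [Nat.factorial_succ]; push_cast; ring
  have h0 : (0 : ℝ) < Nat.factorial n := by exact_mod_cast Nat.factorial_pos n
  have h1 : (0 : ℝ) < (n : ℝ) + 1 := by positivity
  rw [hfac]
  rw [div_le_div_iff₀ (by positivity) h0]
  have : (S1.card : ℝ) ≤ (n+1) * S0.card := by exact_mod_cast hcard
  calc (S1.card : ℝ) * (Nat.factorial n)
      ≤ ((n+1) * S0.card) * Nat.factorial n := by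
        apply mul_le_mul_of_nonneg_right this (le_of_lt h0)
    _ = (S0.card : ℝ) * (((n : ℝ)+1) * Nat.factorial n) := by push_cast; ring
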